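/- Let X be a finite set. The function d(p,p') = (nc(p)+nc(p'))/2 − nc(p∨p') is a distance on the set of partitions of X: for all partitions p, p', p'' of X one has d(p,p') ≥ 0, d(p,p') = 0 if and only if p = p', d(p,p') = d(p',p), and d(p,p'') ≤ d(p,p') + d(p',p''). -/

import Mathlib

open Sum
open scoped Classical

noncomputable section

namespace PartitionPaper

variable {X : Type*}

/-- The number of blocks of a partition of `X`, encoded as a setoid on `X`. -/
def nc (p : Setoid X) : ℕ := Nat.card (Quotient p)

/-- The geodesic distance `d(p,p') = (nc p + nc p')/2 - nc (p ⊔ p')`. -/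
def pdist (p q : Setoid X) : ℚ :=
  ((nc p : ℚ) + (nc q : ℚ)) / 2 - (nc (p ⊔ q) : ℚ)

/-- Geodesic order with base partition `b` : `p' ≤_b p`. -/
def geoLE (b p' p : Setoid X) : Prop := pdist b p' + pdist p' p = pdist b p

/-- Coarser-compatible order `p' ⊣_b p` : `p'` coarser than `p` and
`nc (p' ⊔ b) = nc (p ⊔ b)`.  (In the setoid lattice, `p ≤ p'` means `p` is finer.) -/
def coarserComp (b p' p : Setoid X) : Prop :=
  p ≤ p' ∧ nc (p' ⊔ b) = nc (p ⊔ b)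

/-- Finer-compatible order `p' ⊐_b p` : `p'` finer than `p` and
`nc p' - nc (p' ⊔ b) = nc p - nc (p ⊔ b)`. -/
def finerComp (b p' p : Setoid X) : Prop :=
  p' ≤ p ∧ (nc p' : ℤ) - (nc (p' ⊔ b) : ℤ) = (nc p : ℤ) - (nc (p ⊔ b) : ℤ)

/-- `p'` is obtained from `p` by gluing two blocks of `p` into one. -/
def IsGluing (p p' : Setoid X) : Prop := p ≤ p' ∧ nc p' + 1 = nc p

/-- The Cayley graph on partitions of `X`: an edge iff one partition is obtained
from the other by gluing two of its blocks into one. -/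
def glueGraph (X : Type*) : SimpleGraph (Setoid X) where
  Adj p q := IsGluing p q ∨ IsGluing q p
  symm := ⟨fun _ _ h => h.elim Or.inr Or.inl⟩
  loopless := by
    constructor
    intro p h
    rcases h with ⟨-, h⟩ | ⟨-, h⟩ <;> omega

/-- The segment `[p₁, p₂]` for the geodesic distance. -/
def seg (p₁ p₂ : Setoid X) : Set (Setoid X) :=
  {p | pdist p₁ p + pdist p p₂ = pdist p₁ p₂}

/-- The defect of `p'` from being on `[b, p]`. -/
def df (b p' p : Setoid X) : ℚ := pdist b p' + pdist p' p - pdist b p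

/-- Admissible one-step splits: `p'` is obtained by cutting a (pivotal) block of `p`
into two blocks in such a way that the join with `b` gains one block. -/
def Delta (b p : Setoid X) : Set (Setoid X) :=
  {p' | p' ≤ p ∧ nc p' = nc p + 1 ∧ nc (p' ⊔ b) = nc (p ⊔ b) + 1}

/-- The admissible splits `Sp_b(p) = ⋃ₘ Δ_b^m(p)`. -/
def Sp (b p : Setoid X) : Set (Setoid X) :=
  {p' | Relation.ReflTransGen (fun u v => v ∈ Delta b u) p p'}

/-- The admissible gluings `Gl_b(p)`: partitions obtained by gluing blocks of `p`
without altering the number of blocks of the join with `b`. -/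
def Gl (b p : Setoid X) : Set (Setoid X) :=
  {p' | p ≤ p' ∧ nc (p' ⊔ b) = nc (p ⊔ b)}

/-- `p'` is directly smaller than `p` for the relation `r`. -/
def DirectlySmaller (r : Setoid X → Setoid X → Prop) (p' p : Setoid X) : Prop :=
  r p' p ∧ p' ≠ p ∧ ¬ ∃ p'', p'' ≠ p ∧ p'' ≠ p' ∧ r p' p'' ∧ r p'' p

/-- The block of the partition `p` corresponding to a class `c`. -/
def blockSet (p : Setoid X) (c : Quotient p) : Set X := {x | Quotient.mk p x = c}

/-- The number of blocks of `q` contained in the block `c` of `p`. -/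
def numSubBlocks (q p : Setoid X) (c : Quotient p) : ℕ :=
  Nat.card {d : Quotient q // blockSet q d ⊆ blockSet p c}

/-- The number of blocks of `p` containing exactly `i` blocks of `q`. -/
def rcount (q p : Setoid X) (i : ℕ) : ℕ :=
  Nat.card {c : Quotient p // numSubBlocks q p c = i}

/-- The Möbius function of the refinement order:
`μ_f(q,p) = (-1)^(nc q - nc p) ∏_i ((i-1)!)^(r_i)` for `q` finer than `p`. -/
def muf (q p : Setoid X) : ℤ :=
  (-1) ^ (nc q - nc p) *
    ∏ i ∈ Finset.range (nc q + 1), ((Nat.factorial (i - 1) : ℤ)) ^ (rcount q p i)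

/-- `P_k`: partitions of `{1,…,k} ∪ {1',…,k'}`, the left summand being the
unprimed (top) row and the right summand the primed (bottom) row. -/
abbrev Pk (k : ℕ) := Setoid (Fin k ⊕ Fin k)

/-- The identity partition `id_k = {{i, i'} : 1 ≤ i ≤ k}`. -/
def idk (k : ℕ) : Pk k := Setoid.ker (Sum.elim id id)

/-- The permutation partition associated with `σ`, with blocks `{i, σ(i)'}`. -/
def permPartition {k : ℕ} (σ : Equiv.Perm (Fin k)) : Pk k :=
  Setoid.ker (Sum.elim id σ.symm)

/-- `S_k`, the set of permutation partitions. -/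
def Sk (k : ℕ) : Set (Pk k) := Set.range (permPartition (k := k))

/-- `B_k`, the set of Brauer partitions: all blocks have exactly two elements. -/
def Bk (k : ℕ) : Set (Pk k) := {p | ∀ x, Nat.card {y | p.r x y} = 2}

/-- Embedding of the top/bottom rows of the upper diagram `q` into the
three-row diagram (top ⊕ (middle ⊕ bottom)). -/
def upMap (k : ℕ) : Fin k ⊕ Fin k → Fin k ⊕ (Fin k ⊕ Fin k) :=
  Sum.elim Sum.inl (fun i => Sum.inr (Sum.inl i))

/-- Embedding of the top/bottom rows of the lower diagram `p` into the
three-row diagram. -/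
def downMap (k : ℕ) : Fin k ⊕ Fin k → Fin k ⊕ (Fin k ⊕ Fin k) :=
  Sum.elim (fun i => Sum.inr (Sum.inl i)) (fun i => Sum.inr (Sum.inr i))

/-- The partition of the three-row diagram obtained by stacking a diagram of `q`
on top of a diagram of `p` (identifying the bottom row of `q` with the top row
of `p`): the equivalence relation generated by the copies of `q` and `p`. -/
def stackSetoid {k : ℕ} (p q : Pk k) : Setoid (Fin k ⊕ (Fin k ⊕ Fin k)) :=
  sInf {s | ∀ x y,
    ((∃ a b, upMap k a = x ∧ upMap k b = y ∧ q.r a b) ∨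
     (∃ a b, downMap k a = x ∧ downMap k b = y ∧ p.r a b)) → s.r x y}

/-- The composition `p ∘ q` (a diagram of `q` stacked above a diagram of `p`),
obtained by restricting the stacked partition to the outer rows. -/
def comp {k : ℕ} (p q : Pk k) : Pk k :=
  Setoid.comap (Sum.elim Sum.inl (fun i => Sum.inr (Sum.inr i))) (stackSetoid p q)

/-- `κ(p,q)`: the number of connected components of the stacked diagram entirely
contained in the middle row. -/
def kappaP {k : ℕ} (p q : Pk k) : ℕ :=
  Nat.card {c : Quotient (stackSetoid p q) //
    ∀ x, Quotient.mk (stackSetoid p q) x = c → ∃ i : Fin k, x = Sum.inr (Sum.inl i)}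

/-- The transpose `ᵗp`, exchanging the two rows. -/
def transpose {k : ℕ} (p : Pk k) : Pk k := Setoid.comap Sum.swap p

/-- The disjoint-union partition on a sum type. -/
def sumSetoid {α β : Type*} (p : Setoid α) (q : Setoid β) : Setoid (α ⊕ β) :=
  Setoid.ker (Sum.map (Quotient.mk p) (Quotient.mk q))

/-- Reindexing of the rows for the tensor product. -/
def reindex (k l : ℕ) :
    Fin (k + l) ⊕ Fin (k + l) → (Fin k ⊕ Fin k) ⊕ (Fin l ⊕ Fin l) :=
  Sum.elim
    (fun j => Sum.elim (fun a => Sum.inl (Sum.inl a)) (fun b => Sum.inr (Sum.inl b))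
      (finSumFinEquiv.symm j))
    (fun j => Sum.elim (fun a => Sum.inl (Sum.inr a)) (fun b => Sum.inr (Sum.inr b))
      (finSumFinEquiv.symm j))

/-- The tensor product `p ⊗ q ∈ P_{k+l}`: a diagram of `p` placed to the left of
a diagram of `q`. -/
def tensor {k l : ℕ} (p : Pk k) (q : Pk l) : Pk (k + l) :=
  Setoid.comap (reindex k l) (sumSetoid p q)

/-- The `≺`-defect `η(p,q)`. -/
def eta {k : ℕ} (p q : Pk k) : ℚ :=
  pdist (idk k) p + pdist (idk k) q - pdist (idk k) (comp p q)
    - ((k : ℚ) + (nc (comp p q) : ℚ) - (nc p : ℚ) - (nc q : ℚ)) / 2 - (kappaP p q : ℚ)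

/-- The Kreweras complement of `p'` in `p`: the set of `p''` with `p = p' ∘ p''`
realizing equality in the `≺`-defect inequality. -/
def Krew {k : ℕ} (p p' : Pk k) : Set (Pk k) :=
  {p'' | comp p' p'' = p ∧ eta p' p'' = 0}

/-- `p' ≺ p` : `p'` is an admissible prefix of `p`. -/
def prec {k : ℕ} (p' p : Pk k) : Prop :=
  ∃ p'', comp p' p'' = p ∧ eta p' p'' = 0

/-- The partition of `{1,…,k}` into the orbits (cycles) of the permutation `σ`. -/
def cycleSetoid {k : ℕ} (σ : Equiv.Perm (Fin k)) : Setoid (Fin k) :=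
  ⟨σ.SameCycle,
    ⟨fun x => Equiv.Perm.SameCycle.refl σ x, fun h => h.symm, fun h₁ h₂ => h₁.trans h₂⟩⟩

/-- A partition of `{1,…,k}` is non-crossing if there are no `a < b < c < d` with
`a, c` in one block and `b, d` in a different block. -/
def NonCrossing {k : ℕ} (π : Setoid (Fin k)) : Prop :=
  ¬ ∃ a b c d : Fin k, a < b ∧ b < c ∧ c < d ∧ π.r a c ∧ π.r b d ∧ ¬ π.r a b

/-- The map sending a permutation partition to the partition of `{1,…,k}` into
the orbits of the corresponding bijection (the blocks of `p ⊔ id_k` restricted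
to the top row). -/
def orbitMap {k : ℕ} (p : Pk k) : Setoid (Fin k) :=
  Setoid.comap (Sum.inl : Fin k → Fin k ⊕ Fin k) (p ⊔ idk k)

/-- The permutation `(1,k+1)(2,k+2)⋯(k,2k)` of `{1,…,2k}`. -/
def tauPerm (k : ℕ) : Equiv.Perm (Fin (k + k)) :=
  (finSumFinEquiv.symm.trans (Equiv.sumComm (Fin k) (Fin k))).trans finSumFinEquiv

/-- The left part of a partition in `P_{k₁+k₂}`. -/
def leftPart {k₁ k₂ : ℕ} (p : Pk (k₁ + k₂)) : Pk k₁ :=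
  Setoid.comap (Sum.map (Fin.castAdd k₂) (Fin.castAdd k₂)) p

/-- The right part of a partition in `P_{k₁+k₂}`. -/
def rightPart {k₁ k₂ : ℕ} (p : Pk (k₁ + k₂)) : Pk k₂ :=
  Setoid.comap (Sum.map (Fin.natAdd k₁) (Fin.natAdd k₁)) p

/-- The `p`-moment `m_p(E_N) = Tr_N(E_N ᵗp)/N^{nc(p ⊔ id_k)}
`= ∑_{p'} (E_N)_{p'} N^{nc(p ⊔ p') - nc(p ⊔ id_k)}`. -/
def momentF {k : ℕ} (E : ℕ → Pk k → ℂ) (p : Pk k) (N : ℕ) : ℂ :=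
  ∑ᶠ p' : Pk k, E N p' * (N : ℂ) ^ ((nc (p ⊔ p') : ℤ) - (nc (p ⊔ idk k) : ℤ))

/-- The `p`-cumulant `κ_p(E_N) = N^{nc p - nc (p ⊔ id_k)} (E_N)_p`. -/
def cumulantF {k : ℕ} (E : ℕ → Pk k → ℂ) (p : Pk k) (N : ℕ) : ℂ :=
  (N : ℂ) ^ ((nc p : ℤ) - (nc (p ⊔ idk k) : ℤ)) * E N p

/-! ### Auxiliary lemmas for Statement 1 -/

section Aux

variable {Y : Type*}

/-- The partition identifying `x` and `y` (and nothing else). -/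
def auxPr (x y : Y) : Setoid Y :=
  ⟨fun a b => a = b ∨ ((a = x ∨ a = y) ∧ (b = x ∨ b = y)),
   ⟨fun _ => Or.inl rfl,
    by rintro a b (rfl | ⟨h1, h2⟩); exacts [Or.inl rfl, Or.inr ⟨h2, h1⟩],
    by
      rintro a b c hab hbc
      rcases hab with rfl | ⟨h1, h2⟩
      · exact hbc
      · rcases hbc with rfl | ⟨h3, h4⟩
        · exact Or.inr ⟨h1, h2⟩
        · exact Or.inr ⟨h1, h4⟩⟩⟩

lemma auxPr_rel (x y : Y) : (auxPr x y).r x y :=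
  Or.inr ⟨Or.inl rfl, Or.inr rfl⟩

lemma auxPr_le {s : Setoid Y} {x y : Y} (h : s.r x y) : auxPr x y ≤ s := by
  rw [Setoid.le_def]
  rintro a b (rfl | ⟨(rfl | rfl), (rfl | rfl)⟩)
  exacts [s.refl _, s.refl _, h, s.symm h, s.refl _]

/-- Merging the blocks of `x` and of `y` in `s`. -/
def auxMrg (s : Setoid Y) (x y : Y) : Setoid Y := s ⊔ auxPr x y

/-- Explicit description of `auxMrg`. -/
def auxMrel (s : Setoid Y) (x y : Y) : Setoid Y :=
  ⟨fun a b => s.r a b ∨ (s.r a x ∧ s.r y b) ∨ (s.r a y ∧ s.r x b),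
   ⟨fun a => Or.inl (s.refl a),
    by
      rintro a b (h | ⟨h1, h2⟩ | ⟨h1, h2⟩)
      · exact Or.inl (s.symm h)
      · exact Or.inr (Or.inr ⟨s.symm h2, s.symm h1⟩)
      · exact Or.inr (Or.inl ⟨s.symm h2, s.symm h1⟩),
    by
      rintro a b c (h | ⟨h1, h2⟩ | ⟨h1, h2⟩) (g | ⟨g1, g2⟩ | ⟨g1, g2⟩)
      · exact Or.inl (s.trans h g)
      · exact Or.inr (Or.inl ⟨s.trans h g1, g2⟩)
      · exact Or.inr (Or.inr ⟨s.trans h g1, g2⟩)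
      · exact Or.inr (Or.inl ⟨h1, s.trans h2 g⟩)
      · exact Or.inl (s.trans h1 (s.trans (s.trans (s.symm g1) (s.symm h2)) g2))
      · exact Or.inl (s.trans h1 g2)
      · exact Or.inr (Or.inr ⟨h1, s.trans h2 g⟩)
      · exact Or.inl (s.trans h1 g2)
      · exact Or.inl (s.trans h1 (s.trans (s.symm (s.trans h2 g1)) g2))⟩⟩

lemma auxMrg_eq (s : Setoid Y) (x y : Y) : auxMrg s x y = auxMrel s x y := by
  apply le_antisymm
  · apply sup_le
    · rw [Setoid.le_def]; intro a b h; exact Or.inl h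
    · rw [Setoid.le_def]
      rintro a b (rfl | ⟨(rfl | rfl), (rfl | rfl)⟩)
      exacts [Or.inl (s.refl _), Or.inl (s.refl _), Or.inr (Or.inl ⟨s.refl _, s.refl _⟩),
        Or.inr (Or.inr ⟨s.refl _, s.refl _⟩), Or.inl (s.refl _)]
  · rw [Setoid.le_def]
    rintro a b (h | ⟨h1, h2⟩ | ⟨h1, h2⟩)
    · exact Setoid.le_def.mp le_sup_left h
    · exact (s ⊔ auxPr x y).trans (Setoid.le_def.mp le_sup_left h1)
        ((s ⊔ auxPr x y).trans (Setoid.le_def.mp le_sup_right (auxPr_rel x y))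
          (Setoid.le_def.mp le_sup_left h2))
    · exact (s ⊔ auxPr x y).trans (Setoid.le_def.mp le_sup_left h1)
        ((s ⊔ auxPr x y).trans (Setoid.le_def.mp le_sup_right ((auxPr x y).symm (auxPr_rel x y)))
          (Setoid.le_def.mp le_sup_left h2))

lemma auxMrg_rel {s : Setoid Y} {x y a b : Y} :
    (auxMrg s x y).r a b ↔
      s.r a b ∨ (s.r a x ∧ s.r y b) ∨ (s.r a y ∧ s.r x b) := by
  rw [auxMrg_eq]; exact Iff.rfl

/-- The canonical surjection between quotients for comparable setoids. -/
def auxMap {s t : Setoid Y} (h : s ≤ t) : Quotient s → Quotient t :=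
  Quotient.map' id (fun _ _ hab => Setoid.le_def.mp h hab)

lemma auxMap_mk {s t : Setoid Y} (h : s ≤ t) (a : Y) :
    auxMap h (Quotient.mk'' a) = Quotient.mk'' a := rfl

lemma auxMap_surj {s t : Setoid Y} (h : s ≤ t) : Function.Surjective (auxMap h) := by
  intro c
  induction c using Quotient.inductionOn'
  exact ⟨Quotient.mk'' _, rfl⟩

lemma nc_le_of_le [Finite Y] {s t : Setoid Y} (h : s ≤ t) : nc t ≤ nc s :=
  Nat.card_le_card_of_surjective _ (auxMap_surj h)

lemma nc_auxMrg_add_one [Finite Y] {s : Setoid Y} {x y : Y} (hxy : ¬ s.r x y) :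
    nc (auxMrg s x y) + 1 = nc s := by
  classical
  have hle : s ≤ auxMrg s x y := le_sup_left
  set y0 : Quotient s := Quotient.mk'' y with hy0
  -- bijection between classes of `s` other than that of `y`, and classes of the merge
  have e : {a : Quotient s // a ≠ y0} ≃ Quotient (auxMrg s x y) := by
    refine Equiv.ofBijective (fun a => auxMap hle a.1) ⟨?_, ?_⟩
    · rintro ⟨a, ha⟩ ⟨b, hb⟩ hab
      obtain ⟨a0, rfl⟩ := Quotient.exists_rep a
      obtain ⟨b0, rfl⟩ := Quotient.exists_rep b
      have : (auxMrg s x y).r a0 b0 := Quotient.eq''.mp hab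
      rcases auxMrg_rel.mp this with h | ⟨h1, h2⟩ | ⟨h1, h2⟩
      · exact Subtype.ext (Quotient.sound h)
      · exact absurd (Quotient.sound' (s.symm h2) : _ = y0) hb
      · exact absurd (Quotient.sound' h1 : _ = y0) ha
    · intro c
      obtain ⟨z, rfl⟩ := Quotient.exists_rep c
      by_cases hz : s.r y z
      · refine ⟨⟨Quotient.mk'' x, ?_⟩, ?_⟩
        · intro hc
          exact hxy (Quotient.eq''.mp hc)
        · exact Quotient.sound' (auxMrg_rel.mpr (Or.inr (Or.inl ⟨s.refl x, hz⟩)))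
      · refine ⟨⟨Quotient.mk'' z, ?_⟩, rfl⟩
        intro hc
        exact hz (s.symm (Quotient.eq''.mp hc))
  have h1 : Nat.card {a : Quotient s // a = y0} = 1 := by
    haveI : Unique {a : Quotient s // a = y0} :=
      ⟨⟨⟨y0, rfl⟩⟩, by rintro ⟨a, rfl⟩; rfl⟩
    exact Nat.card_unique
  have h2 : nc s = Nat.card {a : Quotient s // a = y0} +
      Nat.card {a : Quotient s // a ≠ y0} := by
    rw [nc, ← Nat.card_sum]
    exact Nat.card_congr (Equiv.sumCompl (· = y0)).symm
  rw [nc, ← Nat.card_congr e]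
  omega

lemma nc_le_auxMrg_add_one [Finite Y] (s : Setoid Y) (x y : Y) :
    nc s ≤ nc (auxMrg s x y) + 1 := by
  by_cases hxy : s.r x y
  · have : auxMrg s x y = s := sup_eq_left.mpr (auxPr_le hxy)
    rw [this]
    omega
  · exact (nc_auxMrg_add_one hxy).ge

lemma exists_rel_not_rel {s t : Setoid Y} (h : s ≤ t) (hne : s ≠ t) :
    ∃ x y, t.r x y ∧ ¬ s.r x y := by
  by_contra hc
  push_neg at hc
  exact hne (le_antisymm h (Setoid.le_def.mpr fun {x y} hxy => hc x y hxy))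

lemma eq_of_le_of_nc_le [Finite Y] {s t : Setoid Y} (h : s ≤ t) (hn : nc s ≤ nc t) :
    s = t := by
  by_contra hne
  obtain ⟨x, y, hxy, hnxy⟩ := exists_rel_not_rel h hne
  have h1 : auxMrg s x y ≤ t := sup_le h (auxPr_le hxy)
  have h2 := nc_le_of_le h1
  have h3 := nc_auxMrg_add_one hnxy
  omega

/-- The key Lipschitz property of the block-count along the join. -/
lemma nc_key [Finite Y] :
    ∀ n (s t v : Setoid Y), nc s ≤ n → s ≤ t →
      nc t + nc (s ⊔ v) ≤ nc s + nc (t ⊔ v) := by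
  intro n
  induction n with
  | zero =>
    intro s t v hn h
    rcases eq_or_ne s t with rfl | hne
    · omega
    · obtain ⟨x, y, hxy, hnxy⟩ := exists_rel_not_rel h hne
      have := nc_auxMrg_add_one hnxy
      omega
  | succ n ih =>
    intro s t v hn h
    rcases eq_or_ne s t with rfl | hne
    · omega
    · obtain ⟨x, y, hxy, hnxy⟩ := exists_rel_not_rel h hne
      have hcard := nc_auxMrg_add_one hnxy
      have hle : auxMrg s x y ≤ t := sup_le h (auxPr_le hxy)
      have hIH := ih (auxMrg s x y) t v (by omega) hle
      have hsv : auxMrg s x y ⊔ v = auxMrg (s ⊔ v) x y := by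
        rw [auxMrg, auxMrg, sup_right_comm]
      have hstep := nc_le_auxMrg_add_one (s ⊔ v) x y
      rw [hsv] at hIH
      omega

lemma nc_key' [Finite Y] (s t v : Setoid Y) (h : s ≤ t) :
    nc t + nc (s ⊔ v) ≤ nc s + nc (t ⊔ v) :=
  nc_key (nc s) s t v le_rfl h

end Aux

/-- `d(p,p') = (nc p + nc p')/2 - nc (p ⊔ p')` is a distance on the
set of partitions of a finite set `X`. -/
theorem statement1 {X : Type*} [Finite X] :
    (∀ p p' : Setoid X, 0 ≤ pdist p p') ∧
    (∀ p p' : Setoid X, pdist p p' = 0 ↔ p = p') ∧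
    (∀ p p' : Setoid X, pdist p p' = pdist p' p) ∧
    (∀ p p' p'' : Setoid X, pdist p p'' ≤ pdist p p' + pdist p' p'') := by
  have hsup : ∀ p q : Setoid X, nc (p ⊔ q) ≤ nc p ∧ nc (p ⊔ q) ≤ nc q := by
    intro p q
    exact ⟨nc_le_of_le le_sup_left, nc_le_of_le le_sup_right⟩
  refine ⟨?_, ?_, ?_, ?_⟩
  · intro p q
    obtain ⟨h1, h2⟩ := hsup p q
    have h1' : (nc (p ⊔ q) : ℚ) ≤ (nc p : ℚ) := by exact_mod_cast h1
    have h2' : (nc (p ⊔ q) : ℚ) ≤ (nc q : ℚ) := by exact_mod_cast h2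
    unfold pdist
    linarith
  · intro p q
    constructor
    · intro h
      obtain ⟨h1, h2⟩ := hsup p q
      unfold pdist at h
      have h' : (nc p : ℚ) + (nc q : ℚ) = 2 * (nc (p ⊔ q) : ℚ) := by linarith
      have hN : nc p + nc q = 2 * nc (p ⊔ q) := by exact_mod_cast h'
      have hp : p = p ⊔ q := eq_of_le_of_nc_le le_sup_left (by omega)
      have hq : q = p ⊔ q := eq_of_le_of_nc_le le_sup_right (by omega)
      exact hp.trans hq.symm
    · rintro rfl
      unfold pdist
      rw [sup_idem]
      ring
  · intro p q
    unfold pdist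
    rw [sup_comm]
    ring
  · intro p q r
    have h1 : nc (p ⊔ q) + nc (q ⊔ r) ≤ nc q + nc (p ⊔ r) := by
      have hk := nc_key' q (p ⊔ q) (q ⊔ r) le_sup_right
      have he : q ⊔ (q ⊔ r) = q ⊔ r := by rw [← sup_assoc, sup_idem]
      have hle : nc ((p ⊔ q) ⊔ (q ⊔ r)) ≤ nc (p ⊔ r) := by
        apply nc_le_of_le
        exact sup_le (le_sup_left.trans le_sup_left) (le_sup_right.trans le_sup_right)
      rw [he] at hk
      omega
    have h1' : (nc (p ⊔ q) : ℚ) + (nc (q ⊔ r) : ℚ) ≤ (nc q : ℚ) + (nc (p ⊔ r) : ℚ) := by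
      exact_mod_cast h1
    unfold pdist
    linarith

end PartitionPaper
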